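/- Let r > 1 and let F be a set of permutations of {1,…,n} with |F| ≥ 2. Then opt_weak,s,r(F) < r·ln(|F|). -/

import Mathlib

/-- `GuessForce ok V m` means: in the mistake-bound game with weak (yes/no) reinforcement
where queries have type `Q`, guesses have type `A`, and `ok q g f` says that guess `g` is a
correct answer to query `q` when the hidden target is `f`, an (adaptive) adversary whose
answers must stay consistent with some member of the current version space `V` can force
every deterministic learner to be answered "no" at least `m` times.
At each step the adversary chooses a query `q` and, depending on the learner's guess `g`,
either answers "no" (`c g = true`, one more mistake, continuing from the consistent
functions for which the guess is wrong) or answers "yes" (`c g = false`, continuing from the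
consistent functions for which the guess is correct). -/
inductive GuessForce {α Q A : Type*} (ok : Q → A → α → Prop) : Set α → ℕ → Prop where
  | zero (V : Set α) : V.Nonempty → GuessForce ok V 0
  | step (V : Set α) (m : ℕ) (q : Q) (c : A → Bool)
      (hne : ∀ g : A, (if c g then {f ∈ V | ¬ ok q g f} else {f ∈ V | ok q g f}).Nonempty)
      (h : ∀ g : A, GuessForce ok (if c g then {f ∈ V | ¬ ok q g f} else {f ∈ V | ok q g f})
        (if c g then m else m + 1)) :
      GuessForce ok V (m + 1)

/-- `opt_weak,s,r(F)`: the selection model. In each round the adversary chooses `r` (not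
necessarily distinct) inputs `x 0, …, x (r-1)`, and the learner guesses which of them
maximizes the target permutation; weak reinforcement. -/
lemma guessforce_key {α Q : Type*} [Finite α] {r : ℕ} (hr : 1 < r)
    (ok : Q → Fin r → α → Prop) (hcov : ∀ q (f : α), ∃ g, ok q g f)
    {V : Set α} {m : ℕ} (hgf : GuessForce ok V m) :
    ((r : ℝ) / ((r : ℝ) - 1)) ^ m ≤ (V.ncard : ℝ) := by
  have hr1 : (0 : ℝ) < (r : ℝ) - 1 := by
    have : (2 : ℝ) ≤ r := by exact_mod_cast hr
    linarith
  have hrpos : (0 : ℝ) < r := by linarith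
  set c : ℝ := (r : ℝ) / ((r : ℝ) - 1) with hc
  have hc1 : 1 < c := by
    rw [hc, lt_div_iff₀ hr1]; linarith
  have hc0 : 0 ≤ c := by linarith
  induction hgf with
  | zero V hV =>
    simp only [pow_zero]
    have : 0 < V.ncard := (Set.ncard_pos (Set.toFinite V)).2 hV
    exact_mod_cast this
  | step V m q cc hne h ih =>
    classical
    cases nonempty_fintype α
    -- pigeonhole: some guess is correct for at least |V|/r targets
    have hVfin : V.Finite := Set.toFinite V
    have hYfin : ∀ g : Fin r, ({f ∈ V | ok q g f} : Set α).Finite := fun g => Set.toFinite _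
    have hsub : hVfin.toFinset ⊆ Finset.univ.biUnion (fun g => (hYfin g).toFinset) := by
      intro f hf
      rw [Set.Finite.mem_toFinset] at hf
      obtain ⟨g, hg⟩ := hcov q f
      exact Finset.mem_biUnion.2 ⟨g, Finset.mem_univ g, (Set.Finite.mem_toFinset _).2 ⟨hf, hg⟩⟩
    have hsum : V.ncard ≤ ∑ g : Fin r, ({f ∈ V | ok q g f} : Set α).ncard := by
      rw [Set.ncard_eq_toFinset_card' V]
      calc V.toFinset.card = hVfin.toFinset.card := by congr 1; ext x; simp
        _ ≤ (Finset.univ.biUnion (fun g => (hYfin g).toFinset)).card := Finset.card_le_card hsub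
        _ ≤ ∑ g : Fin r, ((hYfin g).toFinset).card := Finset.card_biUnion_le
        _ = ∑ g : Fin r, ({f ∈ V | ok q g f} : Set α).ncard := by
            refine Finset.sum_congr rfl fun g _ => ?_
            rw [Set.ncard_eq_toFinset_card _ (hYfin g)]
    have hpig : ∃ g : Fin r, V.ncard ≤ r * ({f ∈ V | ok q g f} : Set α).ncard := by
      have hs : ∑ _g : Fin r, V.ncard ≤ ∑ g : Fin r, r * ({f ∈ V | ok q g f} : Set α).ncard := by
        rw [Finset.sum_const, Finset.card_univ, Fintype.card_fin, smul_eq_mul,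
          ← Finset.mul_sum]
        exact Nat.mul_le_mul_left r hsum
      obtain ⟨g, _, hg⟩ := Finset.exists_le_of_sum_le (s := (Finset.univ : Finset (Fin r)))
        (f := fun _ => V.ncard) (g := fun g => r * ({f ∈ V | ok q g f} : Set α).ncard)
        ⟨⟨0, by omega⟩, Finset.mem_univ _⟩ hs
      exact ⟨g, hg⟩
    obtain ⟨g₀, hg₀⟩ := hpig
    set Y := {f ∈ V | ok q g₀ f} with hY
    set N := {f ∈ V | ¬ ok q g₀ f} with hN
    have hpart : Y.ncard + N.ncard = V.ncard := by
      rw [← Set.ncard_union_eq ?dj (Set.toFinite _) (Set.toFinite _)]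
      · congr 1
        ext f; by_cases hf : ok q g₀ f <;> simp [hY, hN, hf]
      · case dj =>
        rw [Set.disjoint_left]
        rintro f ⟨_, hok⟩ ⟨_, hnok⟩
        exact hnok hok
    cases hcc : cc g₀ with
    | false =>
      have := ih g₀
      rw [hcc, if_neg Bool.false_ne_true, if_neg Bool.false_ne_true] at this
      calc c ^ (m + 1) ≤ (Y.ncard : ℝ) := this
        _ ≤ (V.ncard : ℝ) := by
            exact_mod_cast Set.ncard_le_ncard (Set.sep_subset _ _) (Set.toFinite _)
    | true =>
      have hIH := ih g₀
      rw [hcc, if_pos rfl, if_pos rfl] at hIH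
      -- c^m ≤ N.ncard, and r * N ≤ (r-1) * V since V ≤ r * Y and Y + N = V
      have hVY : (V.ncard : ℝ) ≤ r * Y.ncard := by exact_mod_cast hg₀
      have hYN : (Y.ncard : ℝ) + N.ncard = V.ncard := by exact_mod_cast hpart
      have h1 : c * N.ncard ≤ V.ncard := by
        rw [hc, div_mul_eq_mul_div, div_le_iff₀ hr1]
        nlinarith
      calc c ^ (m + 1) = c * c ^ m := by ring
        _ ≤ c * N.ncard := by
            exact mul_le_mul_of_nonneg_left hIH hc0
        _ ≤ (V.ncard : ℝ) := h1

noncomputable def optSel (n r : ℕ) (F : Set (Equiv.Perm (Fin n))) : ℕ :=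
  sSup {m | GuessForce
    (fun (x : Fin r → Fin n) (i₀ : Fin r) f => ∀ i, f (x i) ≤ f (x i₀)) F m}

/-- Let `r > 1` and let `F` be a set of permutations of `{1,…,n}` with
`|F| ≥ 2`. Then `opt_weak,s,r(F) < r·ln |F|`. -/
theorem stmt17 (n r : ℕ) (hr : 1 < r) (F : Set (Equiv.Perm (Fin n))) (hF : 2 ≤ F.ncard) :
    (optSel n r F : ℝ) < (r : ℝ) * Real.log F.ncard := by
  have hr1 : (0 : ℝ) < (r : ℝ) - 1 := by
    have : (2 : ℝ) ≤ r := by exact_mod_cast hr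
    linarith
  have hrpos : (0 : ℝ) < r := by linarith
  set c : ℝ := (r : ℝ) / ((r : ℝ) - 1) with hc
  have hc1 : 1 < c := by rw [hc, lt_div_iff₀ hr1]; linarith
  have hFne : F.Nonempty := by
    rcases Set.eq_empty_or_nonempty F with h | h
    · simp [h] at hF
    · exact h
  haveI : Nonempty (Fin r) := ⟨⟨0, by omega⟩⟩
  have hcov : ∀ (x : Fin r → Fin n) (f : Equiv.Perm (Fin n)),
      ∃ i₀, ∀ i, f (x i) ≤ f (x i₀) := by
    intro x f
    obtain ⟨i₀, _, hi⟩ := Finset.exists_max_image Finset.univ (fun i => f (x i))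
      ⟨Classical.arbitrary _, Finset.mem_univ _⟩
    exact ⟨i₀, fun i => hi i (Finset.mem_univ i)⟩
  set S := {m | GuessForce
    (fun (x : Fin r → Fin n) (i₀ : Fin r) f => ∀ i, f (x i) ≤ f (x i₀)) F m} with hS
  have hkey : ∀ m ∈ S, c ^ m ≤ (F.ncard : ℝ) := fun m hm =>
    guessforce_key hr _ hcov hm
  have hSne : S.Nonempty := ⟨0, GuessForce.zero F hFne⟩
  obtain ⟨B, hB⟩ := pow_unbounded_of_one_lt (F.ncard : ℝ) hc1
  have hbdd : BddAbove S := ⟨B, fun m hm => by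
    by_contra hmB
    push_neg at hmB
    have : c ^ B ≤ c ^ m := pow_le_pow_right₀ (le_of_lt hc1) (le_of_lt hmB)
    exact absurd (lt_of_lt_of_le hB (this.trans (hkey m hm))) (lt_irrefl _)⟩
  have hMmem : sSup S ∈ S := Nat.sSup_mem hSne hbdd
  set M := sSup S with hM
  have hMle : c ^ M ≤ (F.ncard : ℝ) := hkey M hMmem
  have hFpos : (1 : ℝ) < (F.ncard : ℝ) := by
    have : (2 : ℝ) ≤ F.ncard := by exact_mod_cast hF
    linarith
  have hlogF : 0 < Real.log F.ncard := Real.log_pos hFpos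
  -- log c > 1 / r
  have hlogc : 1 / (r : ℝ) < Real.log c := by
    have hx : ((r : ℝ) - 1) / r < Real.exp (-(1 / r)) := by
      have h := Real.add_one_lt_exp (x := -(1 / (r : ℝ)))
        (neg_ne_zero.2 (ne_of_gt (by positivity)))
      have h2 : -(1 / (r : ℝ)) + 1 = ((r : ℝ) - 1) / r := by field_simp; ring
      linarith
    have hpos : (0 : ℝ) < ((r : ℝ) - 1) / r := by positivity
    have := Real.log_lt_log hpos hx
    rw [Real.log_exp] at this
    have hinv : ((r : ℝ) - 1) / r = c⁻¹ := by
      rw [hc]; field_simp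
    rw [hinv, Real.log_inv] at this
    linarith
  -- M * log c ≤ log |F|
  have hMlog : (M : ℝ) * Real.log c ≤ Real.log F.ncard := by
    have := Real.log_le_log (by positivity) hMle
    rwa [Real.log_pow] at this
  have hopt : (optSel n r F : ℝ) = (M : ℝ) := by rw [optSel, ← hS, ← hM]
  rw [hopt]
  rcases Nat.eq_zero_or_pos M with h0 | h1
  · rw [h0]; push_cast; positivity
  · have hM1 : (1 : ℝ) ≤ M := by exact_mod_cast h1
    have hMpos : (0 : ℝ) < M := by linarith
    have step : (M : ℝ) * (1 / r) < (M : ℝ) * Real.log c :=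
      mul_lt_mul_of_pos_left hlogc hMpos
    have h3 : (M : ℝ) * (1 / r) < Real.log F.ncard := lt_of_lt_of_le step hMlog
    calc (M : ℝ) = r * ((M : ℝ) * (1 / r)) := by field_simp
      _ < r * Real.log F.ncard := mul_lt_mul_of_pos_left h3 hrpos
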